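/- The family of SIP subsets of ℕ is not a filterdual; that is, it fails the Ramsey property: there exist sets B₁, B₂ ⊆ ℕ such that B₁ ∪ B₂ is an SIP set but neither B₁ nor B₂ is an SIP set. Concretely, for any irrational a ∈ ℝ, the set {n ∈ ℕ : the fractional part of n·a lies in [0,1/8) ∪ (7/8,1)} is an SIP set, and it is the union of B₁ = {n ∈ ℕ : the fractional part of n·a lies in [0,1/8)} and B₂ = {n ∈ ℕ : the fractional part of n·a lies in (7/8,1)}, neither of which is an SIP set. -/

import Mathlib

/-- `IP A`: the set of all finite sums of distinct elements of `A ⊆ ℤ`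
(sums over finite subsets `F ⊆ A`, with the empty sum equal to `0`). -/
def IP (A : Set ℤ) : Set ℤ :=
  {t | ∃ F : Finset ℤ, ↑F ⊆ A ∧ t = ∑ x ∈ F, x}

/-- `SIP A = IP A - IP A`. -/
def SIP (A : Set ℤ) : Set ℤ :=
  {d | ∃ s ∈ IP A, ∃ t ∈ IP A, d = s - t}

/-- The positive part `S_+ = S ∩ ℕ` of a set of integers. -/
def posPart (S : Set ℤ) : Set ℤ := S ∩ {n : ℤ | 0 < n}

/-- `B` (a set of positive integers) is an SIP set: there is an infinite set
`A` of positive integers with `SIP(A)_+ ⊆ B`. -/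
def IsSIPSet (B : Set ℤ) : Prop :=
  ∃ A : Set ℤ, A ⊆ {n : ℤ | 0 < n} ∧ A.Infinite ∧ posPart (SIP A) ⊆ B

lemma round_best (x : ℝ) (m : ℤ) : |x - round x| ≤ |x - m| := by
  rcases eq_or_ne m (round x) with h | h
  · rw [h]
  · have h1 : (1 : ℝ) ≤ |(m : ℝ) - round x| := by
      have : ((m : ℝ)) - round x = ((m - round x : ℤ) : ℝ) := by push_cast; ring
      rw [this, ← Int.cast_abs]
      exact_mod_cast Int.one_le_abs (sub_ne_zero.mpr h)
    have h2 := abs_sub_round x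
    have h3 : |(m : ℝ) - round x| ≤ |(m : ℝ) - x| + |x - round x| := abs_sub_le _ _ _
    have h4 : |(m : ℝ) - x| = |x - m| := abs_sub_comm _ _
    linarith

lemma approx (a : ℝ) (ha : Irrational a) {ε : ℝ} (hε : 0 < ε) (N : ℤ) :
    ∃ n : ℤ, N < n ∧ ∃ m : ℤ, |(n : ℝ) * a - m| < ε := by
  classical
  set s : Finset ℤ := Finset.Icc 1 (max N 1) with hs
  have hsne : s.Nonempty := ⟨1, by simp [hs]⟩
  set δ : ℝ := s.inf' hsne (fun k => |(k : ℝ) * a - round ((k : ℝ) * a)|) with hδ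
  have hδpos : 0 < δ := by
    rw [hδ, Finset.lt_inf'_iff]
    intro k hk
    have hk0 : k ≠ 0 := by
      have := (Finset.mem_Icc.mp hk).1; omega
    have hirr : Irrational ((k : ℝ) * a) := ha.intCast_mul hk0
    have := hirr.ne_int (round ((k : ℝ) * a))
    have : (k : ℝ) * a - round ((k : ℝ) * a) ≠ 0 := sub_ne_zero.mpr this
    exact abs_pos.mpr this
  set δ' := min δ ε with hδ'
  have hδ'pos : 0 < δ' := lt_min hδpos hε
  obtain ⟨n₀, hn₀⟩ := exists_nat_gt (1 / δ')
  have hn₀pos : 0 < n₀ := by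
    by_contra h
    push_neg at h
    interval_cases n₀
    · simp at hn₀; exact absurd hn₀ (not_lt.mpr (by positivity))
  obtain ⟨j, k, hk0, hkn, hjk⟩ := Real.exists_int_int_abs_mul_sub_le a hn₀pos
  have hsmall : |(k : ℝ) * a - j| < δ' := by
    have h1 : (1 : ℝ) / (n₀ + 1) < δ' := by
      rw [div_lt_iff₀ (by positivity)]
      rw [div_lt_iff₀ hδ'pos] at hn₀
      nlinarith
    linarith
  refine ⟨k, ?_, j, lt_of_lt_of_le hsmall (min_le_right _ _)⟩
  by_contra h
  push_neg at h
  have hks : k ∈ s := Finset.mem_Icc.mpr ⟨hk0, le_max_of_le_left h⟩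
  have : δ ≤ |(k : ℝ) * a - round ((k : ℝ) * a)| := Finset.inf'_le _ hks
  have := round_best ((k : ℝ) * a) j
  have : δ' ≤ |(k : ℝ) * a - j| := le_trans (min_le_left _ _) (by linarith)
  linarith

lemma sum_mem_SIP {A : Set ℤ} {F : Finset ℤ} (hF : ↑F ⊆ A) : (∑ x ∈ F, x) ∈ SIP A :=
  ⟨∑ x ∈ F, x, ⟨F, hF, rfl⟩, 0, ⟨∅, by simp⟩, by ring⟩

lemma sub_mem_SIP {A : Set ℤ} {x y : ℤ} (hx : x ∈ A) (hy : y ∈ A) : x - y ∈ SIP A :=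
  ⟨x, ⟨{x}, by simpa using hx, by simp⟩, y, ⟨{y}, by simpa using hy, by simp⟩, rfl⟩

lemma mem_SIP {A : Set ℤ} {x : ℤ} (hx : x ∈ A) : x ∈ SIP A := by
  simpa using sum_mem_SIP (F := {x}) (by simpa using hx)

lemma not_sip (a : ℝ) (ha : Irrational a) :
    ¬ IsSIPSet {n : ℤ | 0 < n ∧ Int.fract ((n : ℝ) * a) < 1 / 8} := by
  rintro ⟨A, hApos, hAinf, hsub⟩
  -- every element of A has fract(x a) ∈ (0, 1/8)
  have hfr : ∀ x ∈ A, 0 < Int.fract ((x : ℝ) * a) ∧ Int.fract ((x : ℝ) * a) < 1/8 := by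
    intro x hx
    have hxpos : 0 < x := hApos hx
    have h1 : Int.fract ((x : ℝ) * a) < 1/8 :=
      (hsub ⟨mem_SIP hx, hxpos⟩).2
    have hirr : Irrational ((x : ℝ) * a) := ha.intCast_mul (ne_of_gt hxpos)
    have h0 : 0 < Int.fract ((x : ℝ) * a) :=
      Int.fract_pos.mpr (hirr.ne_int _)
    exact ⟨h0, h1⟩
  -- fract is strictly increasing along A
  have hmono : ∀ x ∈ A, ∀ y ∈ A, x < y →
      Int.fract ((x : ℝ) * a) < Int.fract ((y : ℝ) * a) := by
    intro x hx y hy hxy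
    set u := Int.fract ((x : ℝ) * a) with hu
    set v := Int.fract ((y : ℝ) * a) with hv
    obtain ⟨hu0, hu1⟩ := hfr x hx
    obtain ⟨hv0, hv1⟩ := hfr y hy
    by_contra h
    push_neg at h  -- v ≤ u
    have hd : y - x ∈ SIP A := sub_mem_SIP hy hx
    have hdpos : 0 < y - x := sub_pos.mpr hxy
    have hlt : Int.fract (((y - x : ℤ) : ℝ) * a) < 1/8 := (hsub ⟨hd, hdpos⟩).2
    have hirr : Irrational (((y - x : ℤ) : ℝ) * a) := ha.intCast_mul (ne_of_gt hdpos)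
    have hne0 : 0 < Int.fract (((y - x : ℤ) : ℝ) * a) :=
      Int.fract_pos.mpr (hirr.ne_int _)
    have key : ((y - x : ℤ) : ℝ) * a = (v - u) + ((⌊(y : ℝ) * a⌋ - ⌊(x : ℝ) * a⌋ : ℤ) : ℝ) := by
      rw [hu, hv, Int.fract, Int.fract]
      push_cast
      ring
    have hfd : Int.fract (((y - x : ℤ) : ℝ) * a) = Int.fract (v - u) := by
      rw [key, Int.fract_add_intCast]
    rcases eq_or_lt_of_le h with heq | hlt2
    · rw [hfd, ← heq, sub_self, Int.fract_zero] at hne0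
      exact lt_irrefl _ hne0
    · have : Int.fract (v - u) = v - u + 1 := by
        have h1 : Int.fract (v - u) = Int.fract (v - u + 1) := by
          rw [show v - u + 1 = v - u + ((1 : ℤ) : ℝ) by push_cast; ring, Int.fract_add_intCast]
        rw [h1, Int.fract_eq_self.mpr ⟨by linarith, by linarith⟩]
      rw [hfd, this] at hlt
      linarith
  -- sums of fracts over finite subsets of A are < 1/8
  have hsum : ∀ F : Finset ℤ, ↑F ⊆ A → ∑ x ∈ F, Int.fract ((x : ℝ) * a) < 1/8 := by
    intro F
    induction F using Finset.induction_on with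
    | empty => intro _; simp
    | insert z F' hx ih =>
      intro hins
      have hzA : z ∈ A := hins (by simp)
      have hF'A : ↑F' ⊆ A := fun w hw => hins (by simp [hw])
      have hihs := ih hF'A
      obtain ⟨hz0, hz1⟩ := hfr z hzA
      have hS0 : 0 ≤ ∑ x ∈ F', Int.fract ((x : ℝ) * a) :=
        Finset.sum_nonneg fun x _ => Int.fract_nonneg _
      have hS01 : 0 ≤ ∑ x ∈ insert z F', Int.fract ((x : ℝ) * a) ∧
          (∑ x ∈ insert z F', Int.fract ((x : ℝ) * a)) < 1 := by
        rw [Finset.sum_insert hx]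
        exact ⟨by positivity, by linarith⟩
      have hspos : 0 < ∑ x ∈ insert z F', x := by
        apply Finset.sum_pos
        · intro i hi; exact hApos (hins hi)
        · exact ⟨z, by simp⟩
      have hmem : (∑ x ∈ insert z F', x) ∈ SIP A := sum_mem_SIP hins
      have hlt : Int.fract (((∑ x ∈ insert z F', x : ℤ) : ℝ) * a) < 1/8 :=
        (hsub ⟨hmem, hspos⟩).2
      have key : ((∑ x ∈ insert z F', x : ℤ) : ℝ) * a =
          (∑ x ∈ insert z F', Int.fract ((x : ℝ) * a)) +
            ((∑ x ∈ insert z F', ⌊(x : ℝ) * a⌋ : ℤ) : ℝ) := by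
        push_cast
        rw [Finset.sum_mul, ← Finset.sum_add_distrib]
        exact Finset.sum_congr rfl fun x _ => by rw [Int.fract]; ring
      rw [key, Int.fract_add_intCast, Int.fract_eq_self.mpr hS01, Finset.sum_insert hx] at hlt
      rw [Finset.sum_insert hx]
      exact hlt
  -- contradiction: take many elements above some x₀
  obtain ⟨x₀, hx₀⟩ := hAinf.nonempty
  set c := Int.fract ((x₀ : ℝ) * a) with hc
  have hc0 : 0 < c := (hfr x₀ hx₀).1
  obtain ⟨n, hn⟩ := exists_nat_ge (1 / 8 / c)
  have hA' : (A \ Set.Icc 1 x₀).Infinite := hAinf.diff (Set.finite_Icc 1 x₀)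
  obtain ⟨F, hFsub, hFcard⟩ := hA'.exists_subset_card_eq n
  have hFA : ↑F ⊆ A := fun x hx => (hFsub hx).1
  have hlow : ∀ x ∈ F, c ≤ Int.fract ((x : ℝ) * a) := by
    intro x hx
    have hmem := hFsub hx
    have hxA : x ∈ A := hmem.1
    have hxgt : x₀ < x := by
      have h1 : ¬ (1 ≤ x ∧ x ≤ x₀) := by
        intro h; exact hmem.2 ⟨h.1, h.2⟩
      have h2 : 0 < x := hApos hxA
      omega
    exact le_of_lt (hmono x₀ hx₀ x hxA hxgt)
  have hge : (n : ℝ) * c ≤ ∑ x ∈ F, Int.fract ((x : ℝ) * a) := by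
    have := Finset.card_nsmul_le_sum F (fun x => Int.fract ((x : ℝ) * a)) c hlow
    rwa [hFcard, nsmul_eq_mul] at this
  have hlt := hsum F hFA
  have : (1 : ℝ) / 8 ≤ (n : ℝ) * c := by
    rw [div_le_iff₀ hc0] at hn
    linarith
  linarith

lemma sip_union (a : ℝ) (ha : Irrational a) :
    IsSIPSet ({n : ℤ | 0 < n ∧ Int.fract ((n : ℝ) * a) < 1 / 8} ∪
        {n : ℤ | 0 < n ∧ 7 / 8 < Int.fract ((n : ℝ) * a)}) := by
  classical
  have hch : ∀ k : ℕ, ∀ N : ℤ, ∃ n : ℤ, N < n ∧ ∃ m : ℤ,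
      |(n : ℝ) * a - m| < (1/2) ^ k / 64 :=
    fun k N => approx a ha (by positivity) N
  choose f hf1 hf2 using hch
  set g : ℕ → ℤ := fun k => Nat.rec (f 0 0) (fun k ih => f (k+1) ih) k with hg
  have hg0 : g 0 = f 0 0 := rfl
  have hgs : ∀ k, g (k+1) = f (k+1) (g k) := fun k => rfl
  have hmono : StrictMono g := by
    apply strictMono_nat_of_lt_succ
    intro k; rw [hgs]; exact hf1 (k+1) (g k)
  have hpos : ∀ k, 0 < g k := by
    intro k
    have h0 : 0 < g 0 := by rw [hg0]; exact hf1 0 0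
    rcases Nat.eq_zero_or_pos k with rfl | hk
    · exact h0
    · exact lt_trans h0 (hmono hk)
  have herr : ∀ k, |(g k : ℝ) * a - round ((g k : ℝ) * a)| < (1/2) ^ k / 64 := by
    intro k
    rcases k with _ | k
    · obtain ⟨m, hm⟩ := hf2 0 0
      exact lt_of_le_of_lt (round_best _ m) hm
    · rw [hgs]
      obtain ⟨m, hm⟩ := hf2 (k+1) (g k)
      exact lt_of_le_of_lt (round_best _ m) hm
  set A : Set ℤ := Set.range g with hA
  set err : ℤ → ℝ := fun x => |(x : ℝ) * a - round ((x : ℝ) * a)| with herrdef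
  have hbound : ∀ F : Finset ℤ, ↑F ⊆ A → ∑ x ∈ F, err x ≤ 1/32 := by
    intro F hF
    have hinj : Set.InjOn g (g ⁻¹' ↑F) := hmono.injective.injOn
    set K : Finset ℕ := F.preimage g hinj with hK
    have h1 : ∑ k ∈ K, err (g k) = ∑ x ∈ F, err x := by
      apply Finset.sum_preimage
      intro x hx hxr
      exact absurd (hF hx) hxr
    rw [← h1]
    have h2 : ∑ k ∈ K, err (g k) ≤ ∑ k ∈ K, (1/2 : ℝ) ^ k / 64 :=
      Finset.sum_le_sum fun k _ => le_of_lt (herr k)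
    have h3 : ∑ k ∈ K, (1/2 : ℝ) ^ k / 64 ≤ ∑ k ∈ Finset.range (K.sup id + 1), (1/2 : ℝ) ^ k / 64 := by
      apply Finset.sum_le_sum_of_subset_of_nonneg
      · intro k hk
        exact Finset.mem_range.mpr (Nat.lt_succ_of_le (Finset.le_sup (f := id) hk))
      · intro k _ _; positivity
    have h4 : ∑ k ∈ Finset.range (K.sup id + 1), (1/2 : ℝ) ^ k / 64 ≤ 2 / 64 := by
      rw [← Finset.sum_div]
      have := sum_geometric_two_le (K.sup id + 1)
      linarith
    linarith
  refine ⟨A, ?_, ?_, ?_⟩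
  · rintro x ⟨k, rfl⟩; exact hpos k
  · exact Set.infinite_range_of_injective hmono.injective
  · rintro d ⟨⟨s, ⟨F, hF, rfl⟩, t, ⟨G, hG, rfl⟩, rfl⟩, hdpos⟩
    set d : ℤ := (∑ x ∈ F, x) - ∑ x ∈ G, x with hd
    have hdpos' : 0 < d := hdpos
    set M : ℤ := (∑ x ∈ F, round ((x : ℝ) * a)) - ∑ x ∈ G, round ((x : ℝ) * a) with hM
    have hclose : |(d : ℝ) * a - M| ≤ 1/16 := by
      have he : (d : ℝ) * a - M =
          (∑ x ∈ F, ((x : ℝ) * a - round ((x : ℝ) * a))) -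
            ∑ x ∈ G, ((x : ℝ) * a - round ((x : ℝ) * a)) := by
        rw [hd, hM]
        push_cast
        rw [sub_mul, Finset.sum_mul, Finset.sum_mul, Finset.sum_sub_distrib, Finset.sum_sub_distrib]
        ring
      rw [he]
      have hFb : |∑ x ∈ F, ((x : ℝ) * a - round ((x : ℝ) * a))| ≤ 1/32 :=
        le_trans (Finset.abs_sum_le_sum_abs _ _) (hbound F hF)
      have hGb : |∑ x ∈ G, ((x : ℝ) * a - round ((x : ℝ) * a))| ≤ 1/32 :=
        le_trans (Finset.abs_sum_le_sum_abs _ _) (hbound G hG)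
      calc |_ - _| ≤ |∑ x ∈ F, ((x : ℝ) * a - round ((x : ℝ) * a))| +
            |∑ x ∈ G, ((x : ℝ) * a - round ((x : ℝ) * a))| := abs_sub _ _
        _ ≤ 1/16 := by linarith
    have hirr : Irrational ((d : ℝ) * a) := ha.intCast_mul (ne_of_gt hdpos')
    have hne : (d : ℝ) * a ≠ M := hirr.ne_int M
    rw [abs_le] at hclose
    rcases lt_or_gt_of_ne hne with hlt | hgt
    · right
      refine ⟨hdpos', ?_⟩
      have hfl : ⌊(d : ℝ) * a⌋ = M - 1 := by
        apply Int.floor_eq_iff.mpr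
        constructor
        · push_cast; linarith
        · push_cast; linarith
      rw [Int.fract, hfl]
      push_cast
      linarith
    · left
      refine ⟨hdpos', ?_⟩
      have hfl : ⌊(d : ℝ) * a⌋ = M := by
        apply Int.floor_eq_iff.mpr
        constructor
        · push_cast; linarith
        · push_cast; linarith
      rw [Int.fract, hfl]
      linarith

/-- the family of SIP sets fails the Ramsey property. Concretely,
for any irrational `a`, with `B₁ = {n ∈ ℕ : fract(n·a) ∈ [0,1/8)}` and
`B₂ = {n ∈ ℕ : fract(n·a) ∈ (7/8,1)}`, the union `B₁ ∪ B₂` is an SIP set but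
neither `B₁` nor `B₂` is an SIP set. -/
theorem sip_not_filterdual (a : ℝ) (ha : Irrational a) :
    IsSIPSet ({n : ℤ | 0 < n ∧ Int.fract ((n : ℝ) * a) < 1 / 8} ∪
        {n : ℤ | 0 < n ∧ 7 / 8 < Int.fract ((n : ℝ) * a)}) ∧
      ¬ IsSIPSet {n : ℤ | 0 < n ∧ Int.fract ((n : ℝ) * a) < 1 / 8} ∧
      ¬ IsSIPSet {n : ℤ | 0 < n ∧ 7 / 8 < Int.fract ((n : ℝ) * a)} := by
  refine ⟨sip_union a ha, not_sip a ha, ?_⟩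
  have hset : {n : ℤ | 0 < n ∧ 7 / 8 < Int.fract ((n : ℝ) * a)} =
      {n : ℤ | 0 < n ∧ Int.fract ((n : ℝ) * (-a)) < 1 / 8} := by
    ext n
    simp only [Set.mem_setOf_eq]
    constructor
    · rintro ⟨hn, hfr⟩
      refine ⟨hn, ?_⟩
      have hirr : Irrational ((n : ℝ) * a) := ha.intCast_mul (ne_of_gt hn)
      have hne : Int.fract ((n : ℝ) * a) ≠ 0 := ne_of_gt (Int.fract_pos.mpr (hirr.ne_int _))
      rw [show (n : ℝ) * (-a) = -((n : ℝ) * a) by ring, Int.fract_neg hne]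
      linarith
    · rintro ⟨hn, hfr⟩
      refine ⟨hn, ?_⟩
      have hirr : Irrational ((n : ℝ) * a) := ha.intCast_mul (ne_of_gt hn)
      have hne : Int.fract ((n : ℝ) * a) ≠ 0 := ne_of_gt (Int.fract_pos.mpr (hirr.ne_int _))
      rw [show (n : ℝ) * (-a) = -((n : ℝ) * a) by ring, Int.fract_neg hne] at hfr
      linarith
  rw [hset]
  exact not_sip (-a) ha.neg
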